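/- Let d,g,h,t≥1 and r≥0 be integers, let G be a (K_{2,2},K_t)-free graph, let Z⊆V(G) with |Z|≤h, and let Z0={z1,z2,z}⊆Z be a 3-clique such that the neighbors of z inside Z are exactly z1 and z2. Let p=(Z0,…,Z_r;Γ_i : i∈[r]) be a (Z0, d+g+2^h·t, r)-phantom in G such that Z_r∩Z=Z0. Then one of the following holds: (a) there exists a (z1,z2,1,g)-crystal c in the induced subgraph G[Z_r] such that V(c) is anticomplete to Z∖Z0; or (b) G has a subgraph U isomorphic to T_{d,r} such that z is the root of U, the set {z1,z2} is disjoint from V(U) and complete to V(U) in G, and for every i∈[r], every vertex u∈V(U) at distance i from z in U with parent u⁻ in U satisfies u∈Γ_i(u⁻z1)∪Γ_i(u⁻z2)⊆Z_i∖Z_{i−1} (in particular V(U)∩Z={z}). -/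

import Mathlib

/-- `G` is `H`-free: no induced subgraph of `G` is isomorphic to `H`. -/
def Free {V W : Type} (G : SimpleGraph V) (H : SimpleGraph W) : Prop :=
  IsEmpty (H ↪g G)

/-- A graph is chordal if it has no induced cycle on at least four vertices. -/
def Chordal {V : Type} (G : SimpleGraph V) : Prop :=
  ∀ n : ℕ, 4 ≤ n → IsEmpty (SimpleGraph.cycleGraph n ↪g G)

/-- A graph is even-hole-free if it has no induced cycle on an even number (at least four)
of vertices. -/
def EvenHoleFree {V : Type} (G : SimpleGraph V) : Prop :=
  ∀ n : ℕ, 4 ≤ n → Even n → IsEmpty (SimpleGraph.cycleGraph n ↪g G)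

/-- `cone F` is obtained from `F` by adding a universal vertex (the vertex `none`). -/
def cone {V : Type} (F : SimpleGraph V) : SimpleGraph (Option V) :=
  SimpleGraph.fromRel (fun u v => u = none ∨ ∃ a b, u = some a ∧ v = some b ∧ F.Adj a b)
/-- `(Z, Γ)` is a `(Z0, d, r)`-phantom in `G`:  `Z0 = Z 0 ⊆ Z 1 ⊆ ⋯ ⊆ Z r`, and for each
`i ∈ [r]` and each edge `uv` of `G[Z (i-1)]`, `Γ i s(u,v)` is a `d`-element subset of
`Z i \ Z (i-1)` complete to `{u, v}`, these sets being pairwise disjoint over distinct edges. -/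
def IsPhantom {V : Type} (G : SimpleGraph V) (Z0 : Set V) (d r : ℕ)
    (Z : ℕ → Set V) (Γ : ℕ → Sym2 V → Set V) : Prop :=
  Z 0 = Z0 ∧
  (∀ i, i < r → Z i ⊆ Z (i + 1)) ∧
  (∀ i, i < r → ∀ u v : V, G.Adj u v → u ∈ Z i → v ∈ Z i →
    (Γ (i + 1) s(u, v)).Finite ∧ (Γ (i + 1) s(u, v)).ncard = d ∧
    Γ (i + 1) s(u, v) ⊆ Z (i + 1) \ Z i ∧
    ∀ x ∈ Γ (i + 1) s(u, v), G.Adj u x ∧ G.Adj v x) ∧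
  (∀ i, i < r → ∀ u v u' v' : V, G.Adj u v → u ∈ Z i → v ∈ Z i →
    G.Adj u' v' → u' ∈ Z i → v' ∈ Z i → s(u, v) ≠ s(u', v') →
    Γ (i + 1) s(u, v) ∩ Γ (i + 1) s(u', v') = ∅)
/-- `(S, S1, S2)` is a `(z1, z2, f, g)`-crystal in `G`. -/
structure IsCrystalIn {V : Type} (G : SimpleGraph V) (z1 z2 : V) (f g : ℕ)
    (S : Finset V) (S1 S2 : V → Finset V) : Prop where
  adj : G.Adj z1 z2
  cardS : S.card = f
  z1_not_mem : z1 ∉ S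
  z2_not_mem : z2 ∉ S
  card1 : ∀ z ∈ S, (S1 z).card = g
  card2 : ∀ z ∈ S, (S2 z).card = g
  avoid1 : ∀ z ∈ S, ∀ x ∈ S1 z, x ∉ S ∧ x ≠ z1 ∧ x ≠ z2
  avoid2 : ∀ z ∈ S, ∀ x ∈ S2 z, x ∉ S ∧ x ≠ z1 ∧ x ≠ z2
  disj11 : ∀ z ∈ S, ∀ z' ∈ S, z ≠ z' → Disjoint (S1 z) (S1 z')
  disj22 : ∀ z ∈ S, ∀ z' ∈ S, z ≠ z' → Disjoint (S2 z) (S2 z')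
  disj12 : ∀ z ∈ S, ∀ z' ∈ S, Disjoint (S1 z) (S2 z')
  adj1 : ∀ z ∈ S, ∀ x ∈ S1 z, G.Adj x z1 ∧ G.Adj x z ∧ ¬ G.Adj x z2
  adj2 : ∀ z ∈ S, ∀ x ∈ S2 z, G.Adj x z2 ∧ G.Adj x z ∧ ¬ G.Adj x z1

/-- The vertex set `V(c)` of a crystal `(S, S1, S2)`. -/
def crystalVerts {V : Type} (S : Finset V) (S1 S2 : V → Finset V) : Set V :=
  ↑S ∪ (⋃ z ∈ S, (↑(S1 z) : Set V)) ∪ (⋃ z ∈ S, (↑(S2 z) : Set V))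
/-- Vertices of the tree `T_{d,r}`: sequences over `Fin d` of length at most `r`. -/
abbrev TdrVert (d r : ℕ) : Type := {l : List (Fin d) // l.length ≤ r}

/-- The tree `T_{d,r}` of radius `r` whose root (the empty list) has degree `d` and in which
every vertex that is neither the root nor a leaf has degree `d+1`. -/
def Tdr (d r : ℕ) : SimpleGraph (TdrVert d r) :=
  SimpleGraph.fromRel
    (fun u v => ∃ a : Fin d, (v : List (Fin d)) = a :: (u : List (Fin d)))


/-- Pick `d` distinct elements of `s` (when possible), with default `v0`. -/
noncomputable def injInto {V : Type} (d : ℕ) (s : Finset V) (v0 : V) : Fin d → V :=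
  if h : d ≤ s.card then
    fun a => ((Finset.equivFinOfCardEq
      (Classical.choose_spec (Finset.exists_subset_card_eq h)).2).symm a : V)
  else fun _ => v0

lemma injInto_mem {V : Type} {d : ℕ} {s : Finset V} (v0 : V) (h : d ≤ s.card) (a : Fin d) :
    injInto d s v0 a ∈ s := by
  rw [injInto, dif_pos h]
  exact (Classical.choose_spec (Finset.exists_subset_card_eq h)).1
    (((Finset.equivFinOfCardEq
      (Classical.choose_spec (Finset.exists_subset_card_eq h)).2).symm a)).2

lemma injInto_inj {V : Type} {d : ℕ} {s : Finset V} (v0 : V) (h : d ≤ s.card) :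
    Function.Injective (injInto d s v0) := by
  intro a b hab
  rw [injInto, dif_pos h] at hab
  have := Subtype.ext hab
  exact (Equiv.injective _) this

/-- Greedy tree builder. -/
noncomputable def build {V : Type} (d : ℕ) (step : V → ℕ → Finset V) (z : V) :
    List (Fin d) → V
  | [] => z
  | a :: l => injInto d (step (build d step z l) l.length) z a

lemma k22_helper {V : Type} {G : SimpleGraph V}
    (hK22 : Free G (completeBipartiteGraph (Fin 2) (Fin 2)))
    {w v x y : V} (hwv : w ≠ v) (hxy : x ≠ y)
    (hwx : G.Adj w x) (hwy : G.Adj w y) (hvx : G.Adj v x) (hvy : G.Adj v y)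
    (hwvn : ¬ G.Adj w v) (hxyn : ¬ G.Adj x y) : False := by
  have hwx' := hwx.ne; have hwy' := hwy.ne; have hvx' := hvx.ne; have hvy' := hvy.ne
  have hxw := hwx.symm; have hyw := hwy.symm; have hxv := hvx.symm; have hyv := hvy.symm
  have hvwn : ¬ G.Adj v w := fun hc => hwvn hc.symm
  have hyxn : ¬ G.Adj y x := fun hc => hxyn hc.symm
  refine hK22.false ⟨⟨Sum.elim ![w, v] ![x, y], ?_⟩, ?_⟩
  · intro a b hab
    rcases a with a | a <;> rcases b with b | b <;> fin_cases a <;> fin_cases b <;>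
      simp_all
  · intro a b
    show G.Adj (Sum.elim ![w, v] ![x, y] a) (Sum.elim ![w, v] ![x, y] b) ↔ _
    rcases a with a | a <;> rcases b with b | b <;> fin_cases a <;> fin_cases b <;>
      simp_all [completeBipartiteGraph, G.irrefl]

/-- `w` has no neighbor in `Z \ {z1, z2, z}`. -/
def Clean {V : Type} (G : SimpleGraph V) (Z : Set V) (z1 z2 z : V) (w : V) : Prop :=
  ∀ v ∈ Z, v ∉ ({z1, z2, z} : Set V) → ¬ G.Adj w v

/-- Good candidate children of `w` at level `i`. -/
def GoodSet {V : Type} (G : SimpleGraph V) (Z : Set V) (Γ : ℕ → Sym2 V → Set V)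
    (z1 z2 z : V) (w : V) (i : ℕ) : Set V :=
  {x | (x ∈ Γ (i + 1) s(w, z1) ∪ Γ (i + 1) s(w, z2)) ∧ G.Adj z1 x ∧ G.Adj z2 x ∧
    Clean G Z z1 z2 z x}

open Classical in
/-- The good candidates, as a finset. -/
noncomputable def Stp {V : Type} (G : SimpleGraph V) (Z : Set V) (Γ : ℕ → Sym2 V → Set V)
    (z1 z2 z : V) (w : V) (i : ℕ) : Finset V :=
  if h : (GoodSet G Z Γ z1 z2 z w i).Finite then h.toFinset else ∅

/-- All ancestors of the node succeeded. -/
def Ok {V : Type} (d : ℕ) (step : V → ℕ → Finset V) (z : V) : List (Fin d) → Prop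
  | [] => True
  | _ :: l => Ok d step z l ∧ d ≤ (step (build d step z l) l.length).card

@[simp] lemma build_nil {V : Type} (d : ℕ) (step : V → ℕ → Finset V) (z : V) :
    build d step z [] = z := rfl

@[simp] lemma build_cons {V : Type} (d : ℕ) (step : V → ℕ → Finset V) (z : V)
    (a : Fin d) (l : List (Fin d)) :
    build d step z (a :: l) = injInto d (step (build d step z l) l.length) z a := rfl

/-- The invariant maintained along the tree. -/
def InvP {V : Type} (G : SimpleGraph V) (Z : Set V) (Zs : ℕ → Set V) (z1 z2 z : V)
    (i : ℕ) (w : V) : Prop :=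
  w ∈ Zs i ∧ G.Adj z1 w ∧ G.Adj z2 w ∧ Clean G Z z1 z2 z w ∧ (w ∈ Z → w = z)

/-- Theorem 4.1 (phantom-to-double-cone): given a `(Z0, d+g+2^h·t, r)`-phantom on the
3-clique `Z0 = {z1, z2, z}` in a `(K_{2,2}, K_t)`-free graph `G` with `Z_r ∩ Z = Z0`, either
there is a `(z1, z2, 1, g)`-crystal in `G[Z_r]` anticomplete to `Z \ Z0`, or `G` has a
subgraph `U` isomorphic to `T_{d,r}` rooted at `z`, with `{z1, z2}` disjoint from and
complete to `V(U)`, whose vertices at distance `i` from `z` lie in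
`Γ_i(u⁻z1) ∪ Γ_i(u⁻z2) ⊆ Z_i \ Z_{i-1}` (`u⁻` the parent); in particular `V(U) ∩ Z = {z}`. -/
theorem stmt9 (d g h t : ℕ) (hd : 1 ≤ d) (hg : 1 ≤ g) (hh : 1 ≤ h) (ht : 1 ≤ t) (r : ℕ)
    {V : Type} (G : SimpleGraph V)
    (hK22 : Free G (completeBipartiteGraph (Fin 2) (Fin 2)))
    (hKt : Free G (⊤ : SimpleGraph (Fin t)))
    (Z : Set V) (hZfin : Z.Finite) (hZcard : Z.ncard ≤ h)
    (z1 z2 z : V) (hZ0sub : {z1, z2, z} ⊆ Z)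
    (hZ0clique : G.IsClique {z1, z2, z}) (hZ0card : ({z1, z2, z} : Set V).ncard = 3)
    (hNz : ∀ y ∈ Z, G.Adj z y ↔ y = z1 ∨ y = z2)
    (Zs : ℕ → Set V) (Γ : ℕ → Sym2 V → Set V)
    (hp : IsPhantom G {z1, z2, z} (d + g + 2 ^ h * t) r Zs Γ)
    (hcap : Zs r ∩ Z = {z1, z2, z}) :
    (∃ (S : Finset V) (S1 S2 : V → Finset V),
      IsCrystalIn G z1 z2 1 g S S1 S2 ∧ crystalVerts S S1 S2 ⊆ Zs r ∧
      ∀ u ∈ crystalVerts S S1 S2, ∀ v ∈ Z \ {z1, z2, z}, ¬ G.Adj u v) ∨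
    (∃ u : Tdr d r →g G, Function.Injective u ∧
      u ⟨[], by simp⟩ = z ∧
      (∀ ℓ : TdrVert d r, u ℓ ≠ z1 ∧ u ℓ ≠ z2 ∧ G.Adj z1 (u ℓ) ∧ G.Adj z2 (u ℓ)) ∧
      (∀ ℓ ℓp : TdrVert d r, ∀ a : Fin d, (ℓ : List (Fin d)) = a :: (ℓp : List (Fin d)) →
        u ℓ ∈ Γ ((ℓp : List (Fin d)).length + 1) s(u ℓp, z1) ∪
              Γ ((ℓp : List (Fin d)).length + 1) s(u ℓp, z2) ∧
        Γ ((ℓp : List (Fin d)).length + 1) s(u ℓp, z1) ∪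
          Γ ((ℓp : List (Fin d)).length + 1) s(u ℓp, z2) ⊆
            Zs ((ℓp : List (Fin d)).length + 1) \ Zs ((ℓp : List (Fin d)).length)) ∧
      Set.range u ∩ Z = {z}) := by
  classical
  obtain ⟨hZs0, hZstep, hΓ, hΓd⟩ := hp
  set N := d + g + 2 ^ h * t with hNdef
  -- distinctness of z1, z2, z
  have hz12 : z1 ≠ z2 := by
    rintro rfl
    have h2 : ({z1, z1, z} : Set V) = {z1, z} := by simp
    rw [h2] at hZ0card
    have h3 := Set.ncard_insert_le z1 ({z} : Set V)
    simp [Set.ncard_singleton] at h3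
    omega
  have hz1z : z1 ≠ z := by
    rintro rfl
    have h2 : ({z1, z2, z1} : Set V) = {z1, z2} := by
      ext x; simp; tauto
    rw [h2] at hZ0card
    have h3 := Set.ncard_insert_le z1 ({z2} : Set V)
    simp [Set.ncard_singleton] at h3
    omega
  have hz2z : z2 ≠ z := by
    rintro rfl
    have h2 : ({z1, z2, z2} : Set V) = {z1, z2} := by simp
    rw [h2] at hZ0card
    have h3 := Set.ncard_insert_le z1 ({z2} : Set V)
    simp [Set.ncard_singleton] at h3
    omega
  have a12 : G.Adj z1 z2 := hZ0clique (by simp) (by simp) hz12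
  have a1z : G.Adj z1 z := hZ0clique (by simp) (by simp) hz1z
  have a2z : G.Adj z2 z := hZ0clique (by simp) (by simp) hz2z
  have cliquefree : G.CliqueFree t := SimpleGraph.cliqueFree_iff.mpr ⟨fun f => hKt.false f.topEmbedding⟩
  -- monotonicity of the Zs chain
  have Zmono : ∀ i j : ℕ, i ≤ j → j ≤ r → Zs i ⊆ Zs j := by
    intro i j hij hjr
    induction j with
    | zero =>
      have : i = 0 := by omega
      subst this; exact Set.Subset.rfl
    | succ j ih =>
      rcases Nat.eq_or_lt_of_le hij with hle | hlt
      · subst hle; exact Set.Subset.rfl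
      · exact (ih (by omega) (by omega)).trans (hZstep j (by omega))
  have hz1Zs : ∀ i, i ≤ r → z1 ∈ Zs i := fun i hi =>
    Zmono 0 i (Nat.zero_le i) hi (by rw [hZs0]; simp)
  have hz2Zs : ∀ i, i ≤ r → z2 ∈ Zs i := fun i hi =>
    Zmono 0 i (Nat.zero_le i) hi (by rw [hZs0]; simp)
  have hzZs : ∀ i, i ≤ r → z ∈ Zs i := fun i hi =>
    Zmono 0 i (Nat.zero_le i) hi (by rw [hZs0]; simp)
  -- vertices of later layers are not in Z
  have hnotZ : ∀ i x, i + 1 ≤ r → x ∈ Zs (i + 1) \ Zs i → x ∉ Z := by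
    intro i x hi hx hxZ
    have h1 : x ∈ Zs r := Zmono (i + 1) r hi le_rfl hx.1
    have h2 : x ∈ ({z1, z2, z} : Set V) := hcap ▸ Set.mem_inter h1 hxZ
    have h3 : x ∈ Zs i := Zmono 0 i (Nat.zero_le i) (by omega) (by rw [hZs0]; exact h2)
    exact hx.2 h3
  -- phantom facts for an invariant vertex
  have hAfacts : ∀ i, i < r → ∀ w, InvP G Z Zs z1 z2 z i w →
      (Γ (i + 1) s(w, z1)).Finite ∧ (Γ (i + 1) s(w, z1)).ncard = N ∧
        Γ (i + 1) s(w, z1) ⊆ Zs (i + 1) \ Zs i ∧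
        (∀ x ∈ Γ (i + 1) s(w, z1), G.Adj w x ∧ G.Adj z1 x) := by
    intro i hi w hw
    exact hΓ i hi w z1 hw.2.1.symm hw.1 (hz1Zs i (by omega))
  have hBfacts : ∀ i, i < r → ∀ w, InvP G Z Zs z1 z2 z i w →
      (Γ (i + 1) s(w, z2)).Finite ∧ (Γ (i + 1) s(w, z2)).ncard = N ∧
        Γ (i + 1) s(w, z2) ⊆ Zs (i + 1) \ Zs i ∧
        (∀ x ∈ Γ (i + 1) s(w, z2), G.Adj w x ∧ G.Adj z2 x) := by
    intro i hi w hw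
    exact hΓ i hi w z2 hw.2.2.1.symm hw.1 (hz2Zs i (by omega))
  have hABdisj : ∀ i, i < r → ∀ w, InvP G Z Zs z1 z2 z i w →
      Γ (i + 1) s(w, z1) ∩ Γ (i + 1) s(w, z2) = ∅ := by
    intro i hi w hw
    refine hΓd i hi w z1 w z2 hw.2.1.symm hw.1 (hz1Zs i (by omega))
      hw.2.2.1.symm hw.1 (hz2Zs i (by omega)) ?_
    intro hcontra
    rw [Sym2.eq_iff] at hcontra
    rcases hcontra with ⟨-, h⟩ | ⟨h, -⟩
    · exact hz12 h
    · exact hw.2.2.1.ne h.symm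
  -- counting: few vertices of a candidate set are dirty
  have hdirty : ∀ (w : V) (A : Finset V),
      Clean G Z z1 z2 z w → (w ∈ Z → w = z) → (∀ x ∈ A, G.Adj w x) →
      (A.filter (fun x => ¬ Clean G Z z1 z2 z x)).card ≤ 2 ^ h * t := by
    intro w A hcw hwZ hadj
    have hpiece : ∀ v ∈ Z, v ∉ ({z1, z2, z} : Set V) →
        (A.filter (fun x => G.Adj x v)).card ≤ t := by
      intro v hv hv0
      by_contra hcon
      push_neg at hcon
      have hclique : G.IsClique ((A.filter (fun x => G.Adj x v)) : Finset V) := by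
        intro x hx y hy hxy
        simp only [Finset.coe_filter, Set.mem_setOf_eq] at hx hy
        by_contra hnadj
        have hwv : w ≠ v := by
          rintro rfl
          exact hv0 (by simp [hwZ hv])
        exact k22_helper hK22 hwv hxy (hadj x hx.1) (hadj y hy.1) hx.2.symm hy.2.symm
          (hcw v hv hv0) hnadj
      obtain ⟨s, hs, hcard⟩ := Finset.exists_subset_card_eq hcon.le
      exact cliquefree s ⟨hclique.subset (by exact_mod_cast hs), hcard⟩
    have hsub : A.filter (fun x => ¬ Clean G Z z1 z2 z x) ⊆
        (hZfin.toFinset.filter (fun v => v ∉ ({z1, z2, z} : Set V))).biUnion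
          (fun v => A.filter (fun x => G.Adj x v)) := by
      intro x hx
      rw [Finset.mem_filter] at hx
      obtain ⟨hxA, hxd⟩ := hx
      rw [Clean] at hxd
      push_neg at hxd
      obtain ⟨v, hv, hv0, hvadj⟩ := hxd
      rw [Finset.mem_biUnion]
      exact ⟨v, by rw [Finset.mem_filter, Set.Finite.mem_toFinset]; exact ⟨hv, hv0⟩,
        by rw [Finset.mem_filter]; exact ⟨hxA, hvadj⟩⟩
    calc (A.filter (fun x => ¬ Clean G Z z1 z2 z x)).card
        ≤ ((hZfin.toFinset.filter (fun v => v ∉ ({z1, z2, z} : Set V))).biUnion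
            (fun v => A.filter (fun x => G.Adj x v))).card := Finset.card_le_card hsub
      _ ≤ (hZfin.toFinset.filter (fun v => v ∉ ({z1, z2, z} : Set V))).card * t :=
          Finset.card_biUnion_le_card_mul _ _ _ (fun v hv => by
            rw [Finset.mem_filter, Set.Finite.mem_toFinset] at hv
            exact hpiece v hv.1 hv.2)
      _ ≤ 2 ^ h * t := by
          refine Nat.mul_le_mul ?_ le_rfl
          calc (hZfin.toFinset.filter (fun v => v ∉ ({z1, z2, z} : Set V))).card
              ≤ hZfin.toFinset.card := Finset.card_filter_le _ _
            _ = Z.ncard := (Set.ncard_eq_toFinset_card Z hZfin).symm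
            _ ≤ h := hZcard
            _ ≤ 2 ^ h := (Nat.lt_two_pow_self).le
  -- the good set is finite, and Stp is its finset
  have hGfin : ∀ i, i < r → ∀ w, InvP G Z Zs z1 z2 z i w →
      (GoodSet G Z Γ z1 z2 z w i).Finite := by
    intro i hi w hw
    refine Set.Finite.subset (((hAfacts i hi w hw).1).union ((hBfacts i hi w hw).1)) ?_
    intro x hx
    exact hx.1
  have hstp : ∀ i, i < r → ∀ w, InvP G Z Zs z1 z2 z i w → ∀ x,
      x ∈ Stp G Z Γ z1 z2 z w i ↔ x ∈ GoodSet G Z Γ z1 z2 z w i := by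
    intro i hi w hw x
    rw [Stp, dif_pos (hGfin i hi w hw), Set.Finite.mem_toFinset]
  -- invariant propagates to good children
  have hchild : ∀ i, i < r → ∀ w, InvP G Z Zs z1 z2 z i w →
      ∀ x ∈ GoodSet G Z Γ z1 z2 z w i,
      InvP G Z Zs z1 z2 z (i + 1) x ∧ x ∈ Zs (i + 1) \ Zs i ∧ G.Adj w x ∧ x ∉ Z := by
    intro i hi w hw x hx
    obtain ⟨hxAB, hxz1, hxz2, hxclean⟩ := hx
    have hlayer : x ∈ Zs (i + 1) \ Zs i := by
      rcases hxAB with hxA | hxB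
      · exact (hAfacts i hi w hw).2.2.1 hxA
      · exact (hBfacts i hi w hw).2.2.1 hxB
    have hxadj : G.Adj w x := by
      rcases hxAB with hxA | hxB
      · exact ((hAfacts i hi w hw).2.2.2 x hxA).1
      · exact ((hBfacts i hi w hw).2.2.2 x hxB).1
    have hxnotZ : x ∉ Z := hnotZ i x (by omega) hlayer
    exact ⟨⟨hlayer.1, hxz1, hxz2, hxclean, fun hc => absurd hc hxnotZ⟩, hlayer, hxadj, hxnotZ⟩
  -- the greedy construction
  set stp : V → ℕ → Finset V := Stp G Z Γ z1 z2 z with hstpdef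
  set u0 : List (Fin d) → V := build d stp z with hu0def
  have hinv0 : InvP G Z Zs z1 z2 z 0 z := by
    refine ⟨by rw [hZs0]; simp, a1z, a2z, ?_, fun _ => rfl⟩
    intro v hv hv0 hadj
    rcases (hNz v hv).mp hadj with rfl | rfl
    · exact hv0 (by simp)
    · exact hv0 (by simp)
  have hkey : ∀ l : List (Fin d), l.length ≤ r → Ok d stp z l →
      InvP G Z Zs z1 z2 z l.length (u0 l) := by
    intro l
    induction l with
    | nil => intro _ _; exact hinv0
    | cons a l ih =>
      intro hlen hok
      have hlr : l.length < r := by simpa using hlen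
      have hinv := ih (by omega) hok.1
      have hmem : u0 (a :: l) ∈ GoodSet G Z Γ z1 z2 z (u0 l) l.length := by
        have := injInto_mem z hok.2 a
        rw [← hstp l.length hlr (u0 l) hinv]
        exact this
      simpa using (hchild l.length hlr (u0 l) hinv _ hmem).1
  by_cases hfail : ∃ l : List (Fin d), l.length < r ∧ Ok d stp z l ∧
      ¬ d ≤ (stp (u0 l) l.length).card
  · -- crystal case
    obtain ⟨l, hlr, hokl, hns⟩ := hfail
    have hinv := hkey l (le_of_lt hlr) hokl
    set i := l.length with hidef
    set w := u0 l with hwdef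
    have hA := hAfacts i hlr w hinv
    have hB := hBfacts i hlr w hinv
    have hcapA : hA.1.toFinset.card = N := by
      rw [← Set.ncard_eq_toFinset_card _ hA.1]; exact hA.2.1
    have hcapB : hB.1.toFinset.card = N := by
      rw [← Set.ncard_eq_toFinset_card _ hB.1]; exact hB.2.1
    have hextract : ∀ (y : V) (AF : Finset V), AF.card = N →
        (∀ x ∈ AF, x ∈ Zs (i + 1) \ Zs i) →
        (∀ x ∈ AF, G.Adj w x) →
        (∀ x ∈ AF, (fun u v => u ∈ stp v i) x w →
          x ∈ stp w i) →
        (∀ x ∈ AF, Clean G Z z1 z2 z x → G.Adj y x → x ∈ stp w i) →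
        g ≤ (AF.filter (fun x => Clean G Z z1 z2 z x ∧ ¬ G.Adj y x)).card := by
      intro y AF hcard hlayer hadjw _ hgoodmem
      have hd1 : (AF.filter (fun x => ¬ Clean G Z z1 z2 z x)).card ≤ 2 ^ h * t :=
        hdirty w AF hinv.2.2.2.1 hinv.2.2.2.2 hadjw
      have hg1 : (AF.filter (fun x => Clean G Z z1 z2 z x ∧ G.Adj y x)).card < d := by
        have hsubstp : AF.filter (fun x => Clean G Z z1 z2 z x ∧ G.Adj y x) ⊆
            stp w i := by
          intro x hx
          rw [Finset.mem_filter] at hx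
          exact hgoodmem x hx.1 hx.2.1 hx.2.2
        have := Finset.card_le_card hsubstp
        omega
      have hsplit : AF ⊆ (AF.filter (fun x => ¬ Clean G Z z1 z2 z x)) ∪
          (AF.filter (fun x => Clean G Z z1 z2 z x ∧ G.Adj y x)) ∪
          (AF.filter (fun x => Clean G Z z1 z2 z x ∧ ¬ G.Adj y x)) := by
        intro x hx
        simp only [Finset.mem_union, Finset.mem_filter]
        by_cases hc : Clean G Z z1 z2 z x
        · by_cases ha : G.Adj y x
          · exact Or.inl (Or.inr ⟨hx, hc, ha⟩)
          · exact Or.inr ⟨hx, hc, ha⟩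
        · exact Or.inl (Or.inl ⟨hx, hc⟩)
      have hcards := Finset.card_le_card hsplit
      have h2 := Finset.card_union_le
        ((AF.filter (fun x => ¬ Clean G Z z1 z2 z x)) ∪
          (AF.filter (fun x => Clean G Z z1 z2 z x ∧ G.Adj y x)))
        (AF.filter (fun x => Clean G Z z1 z2 z x ∧ ¬ G.Adj y x))
      have h3 := Finset.card_union_le
        (AF.filter (fun x => ¬ Clean G Z z1 z2 z x))
        (AF.filter (fun x => Clean G Z z1 z2 z x ∧ G.Adj y x))
      omega
    have hmemAF : ∀ x, x ∈ hA.1.toFinset ↔ x ∈ Γ (i + 1) s(w, z1) := fun x =>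
      Set.Finite.mem_toFinset _
    have hmemBF : ∀ x, x ∈ hB.1.toFinset ↔ x ∈ Γ (i + 1) s(w, z2) := fun x =>
      Set.Finite.mem_toFinset _
    have hext1 : g ≤ ((hA.1.toFinset).filter
        (fun x => Clean G Z z1 z2 z x ∧ ¬ G.Adj z2 x)).card := by
      refine hextract z2 hA.1.toFinset hcapA ?_ ?_ (fun x _ hx => hx) ?_
      · intro x hx; exact hA.2.2.1 ((hmemAF x).mp hx)
      · intro x hx; exact (hA.2.2.2 x ((hmemAF x).mp hx)).1
      · intro x hx hc ha
        rw [hstp i hlr w hinv]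
        exact ⟨Or.inl ((hmemAF x).mp hx), (hA.2.2.2 x ((hmemAF x).mp hx)).2, ha, hc⟩
    have hext2 : g ≤ ((hB.1.toFinset).filter
        (fun x => Clean G Z z1 z2 z x ∧ ¬ G.Adj z1 x)).card := by
      refine hextract z1 hB.1.toFinset hcapB ?_ ?_ (fun x _ hx => hx) ?_
      · intro x hx; exact hB.2.2.1 ((hmemBF x).mp hx)
      · intro x hx; exact (hB.2.2.2 x ((hmemBF x).mp hx)).1
      · intro x hx hc ha
        rw [hstp i hlr w hinv]
        exact ⟨Or.inr ((hmemBF x).mp hx), ha, (hB.2.2.2 x ((hmemBF x).mp hx)).2, hc⟩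
    obtain ⟨S1', hS1sub, hS1card⟩ := Finset.exists_subset_card_eq hext1
    obtain ⟨S2', hS2sub, hS2card⟩ := Finset.exists_subset_card_eq hext2
    have hS1P : ∀ x ∈ S1', x ∈ Γ (i + 1) s(w, z1) ∧ x ∈ Zs (i + 1) \ Zs i ∧
        G.Adj w x ∧ G.Adj z1 x ∧ Clean G Z z1 z2 z x ∧ ¬ G.Adj z2 x ∧ x ∉ Z := by
      intro x hx
      have h1 := hS1sub hx
      rw [Finset.mem_filter, hmemAF x] at h1
      have hlay := hA.2.2.1 h1.1
      exact ⟨h1.1, hlay, (hA.2.2.2 x h1.1).1, (hA.2.2.2 x h1.1).2, h1.2.1, h1.2.2,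
        hnotZ i x (by omega) hlay⟩
    have hS2P : ∀ x ∈ S2', x ∈ Γ (i + 1) s(w, z2) ∧ x ∈ Zs (i + 1) \ Zs i ∧
        G.Adj w x ∧ G.Adj z2 x ∧ Clean G Z z1 z2 z x ∧ ¬ G.Adj z1 x ∧ x ∉ Z := by
      intro x hx
      have h1 := hS2sub hx
      rw [Finset.mem_filter, hmemBF x] at h1
      have hlay := hB.2.2.1 h1.1
      exact ⟨h1.1, hlay, (hB.2.2.2 x h1.1).1, (hB.2.2.2 x h1.1).2, h1.2.1, h1.2.2,
        hnotZ i x (by omega) hlay⟩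
    have hz1Z : z1 ∈ Z := hZ0sub (by simp)
    have hz2Z : z2 ∈ Z := hZ0sub (by simp)
    refine Or.inl ⟨{w}, fun _ => S1', fun _ => S2', ?_, ?_, ?_⟩
    · refine ⟨a12, Finset.card_singleton w, ?_, ?_, fun _ _ => hS1card, fun _ _ => hS2card,
        ?_, ?_, ?_, ?_, ?_, ?_, ?_⟩
      · simp only [Finset.mem_singleton]; exact hinv.2.1.ne
      · simp only [Finset.mem_singleton]; exact hinv.2.2.1.ne
      · intro z' hz' x hx
        obtain ⟨-, hlay, -, hadj1, -, -, hxZ⟩ := hS1P x hx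
        refine ⟨?_, fun hc => hxZ (hc ▸ hz1Z), fun hc => hxZ (hc ▸ hz2Z)⟩
        simp only [Finset.mem_singleton]
        rintro rfl
        exact hlay.2 hinv.1
      · intro z' hz' x hx
        obtain ⟨-, hlay, -, hadj2, -, -, hxZ⟩ := hS2P x hx
        refine ⟨?_, fun hc => hxZ (hc ▸ hz1Z), fun hc => hxZ (hc ▸ hz2Z)⟩
        simp only [Finset.mem_singleton]
        rintro rfl
        exact hlay.2 hinv.1
      · intro z' h1 z'' h2 hne
        simp only [Finset.mem_singleton] at h1 h2
        exact absurd (h1.trans h2.symm) hne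
      · intro z' h1 z'' h2 hne
        simp only [Finset.mem_singleton] at h1 h2
        exact absurd (h1.trans h2.symm) hne
      · intro z' _ z'' _
        rw [Finset.disjoint_left]
        intro x hx1 hx2
        have hemp := hABdisj i hlr w hinv
        have : x ∈ Γ (i + 1) s(w, z1) ∩ Γ (i + 1) s(w, z2) :=
          Set.mem_inter (hS1P x hx1).1 (hS2P x hx2).1
        rw [hemp] at this
        exact this
      · intro z' hz' x hx
        simp only [Finset.mem_singleton] at hz'
        subst hz'
        obtain ⟨-, -, hadjw, hadj1, -, hnadj2, -⟩ := hS1P x hx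
        exact ⟨hadj1.symm, hadjw.symm, fun hc => hnadj2 hc.symm⟩
      · intro z' hz' x hx
        simp only [Finset.mem_singleton] at hz'
        subst hz'
        obtain ⟨-, -, hadjw, hadj2, -, hnadj1, -⟩ := hS2P x hx
        exact ⟨hadj2.symm, hadjw.symm, fun hc => hnadj1 hc.symm⟩
    · intro v hv
      rcases hv with (hv | hv) | hv
      · simp only [Finset.coe_singleton, Set.mem_singleton_iff] at hv
        subst hv
        exact Zmono i r (by omega) le_rfl hinv.1
      · simp only [Set.mem_iUnion, Finset.mem_coe, exists_prop] at hv
        obtain ⟨z', -, hv⟩ := hv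
        exact Zmono (i + 1) r (by omega) le_rfl (hS1P v hv).2.1.1
      · simp only [Set.mem_iUnion, Finset.mem_coe, exists_prop] at hv
        obtain ⟨z', -, hv⟩ := hv
        exact Zmono (i + 1) r (by omega) le_rfl (hS2P v hv).2.1.1
    · intro u hu v hv
      rcases hu with (hu | hu) | hu
      · simp only [Finset.coe_singleton, Set.mem_singleton_iff] at hu
        subst hu
        exact hinv.2.2.2.1 v hv.1 hv.2
      · simp only [Set.mem_iUnion, Finset.mem_coe, exists_prop] at hu
        obtain ⟨z', -, hu⟩ := hu
        exact (hS1P u hu).2.2.2.2.1 v hv.1 hv.2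
      · simp only [Set.mem_iUnion, Finset.mem_coe, exists_prop] at hu
        obtain ⟨z', -, hu⟩ := hu
        exact (hS2P u hu).2.2.2.2.1 v hv.1 hv.2
  · -- tree case
    push_neg at hfail
    have hok : ∀ l : List (Fin d), l.length ≤ r → Ok d stp z l := by
      intro l
      induction l with
      | nil => intro _; trivial
      | cons a l ih =>
        intro hlen
        have hlr : l.length < r := by simpa using hlen
        have h1 := ih (by omega)
        exact ⟨h1, hfail l hlr h1⟩
    have hInvAll : ∀ l : List (Fin d), l.length ≤ r →
        InvP G Z Zs z1 z2 z l.length (u0 l) := fun l hl => hkey l hl (hok l hl)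
    have hmemG : ∀ (a : Fin d) (l : List (Fin d)), l.length + 1 ≤ r →
        u0 (a :: l) ∈ GoodSet G Z Γ z1 z2 z (u0 l) l.length := by
      intro a l hlen
      have hinv := hInvAll l (by omega)
      rw [← hstp l.length (by omega) (u0 l) hinv]
      exact injInto_mem z (hok (a :: l) (by simpa using hlen)).2 a
    have hconsEq : ∀ (a : Fin d) (m : List (Fin d)),
        u0 (a :: m) = injInto d (stp (u0 m) m.length) z a := by
      intro a m; rw [hu0def]; rfl
    -- distinct lengths give distinct vertices
    have hlt_ne : ∀ l l' : List (Fin d), l.length < l'.length → l'.length ≤ r →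
        u0 l ≠ u0 l' := by
      intro l l' hlt hl' heq
      cases l' with
      | nil => simp at hlt
      | cons a m =>
        have hml : m.length + 1 ≤ r := by simpa using hl'
        have h2 := (hchild m.length (by omega) (u0 m) (hInvAll m (by omega)) _
          (hmemG a m hml)).2.1.2
        have h1 : u0 l ∈ Zs m.length :=
          Zmono l.length m.length (by simp only [List.length_cons] at hlt; omega) (by omega) (hInvAll l (by omega)).1
        rw [heq] at h1
        exact h2 h1
    have hlen_eq : ∀ l l' : List (Fin d), l.length ≤ r → l'.length ≤ r →
        u0 l = u0 l' → l.length = l'.length := by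
      intro l l' hl hl' heq
      rcases lt_trichotomy l.length l'.length with hc | hc | hc
      · exact absurd heq (hlt_ne l l' hc hl')
      · exact hc
      · exact absurd heq.symm (hlt_ne l' l hc hl)
    -- full injectivity
    have hinj : ∀ l l' : List (Fin d), l.length ≤ r → l'.length ≤ r →
        u0 l = u0 l' → l = l' := by
      intro l
      induction l with
      | nil =>
        intro l' hl hl' heq
        have := (hlen_eq [] l' hl hl' heq).symm
        simpa using (List.length_eq_zero_iff.mp (by simpa using this))
      | cons a m ih =>
        intro l' hl hl' heq
        have hlen := hlen_eq (a :: m) l' hl hl' heq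
        cases l' with
        | nil => simp at hlen
        | cons b m' =>
          have hlmm : m.length = m'.length := by simpa using hlen
          have hmr : m.length + 1 ≤ r := by simpa using hl
          have hmr' : m'.length + 1 ≤ r := by simpa using hl'
          have hinvm := hInvAll m (by omega)
          have hinvm' := hInvAll m' (by omega)
          have hx := hmemG a m hmr
          have hx' := hmemG b m' hmr'
          by_cases hww : u0 m = u0 m'
          · have hmm : m = m' := ih m' (by omega) (by omega) hww
            subst hmm
            have hdle : d ≤ (stp (u0 m) m.length).card := (hok (a :: m) hl).2
            rw [hconsEq a m, hconsEq b m] at heq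
            have hab : a = b := injInto_inj z hdle heq
            rw [hab]
          · exfalso
            have ed : ∀ y y' : V, (y = z1 ∨ y = z2) → (y' = z1 ∨ y' = z2) →
                s(u0 m, y) ≠ s(u0 m', y') := by
              intro y y' hy hy' hcontra
              rw [Sym2.eq_iff] at hcontra
              rcases hcontra with ⟨h1, -⟩ | ⟨h1, -⟩
              · exact hww h1
              · rcases hy' with rfl | rfl
                · exact hinvm.2.1.ne h1.symm
                · exact hinvm.2.2.1.ne h1.symm
            have hdis : ∀ y y' : V, (y = z1 ∨ y = z2) → (y' = z1 ∨ y' = z2) →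
                Γ (m.length + 1) s(u0 m, y) ∩ Γ (m.length + 1) s(u0 m', y') = ∅ := by
              intro y y' hy hy'
              refine hΓd m.length (by omega) (u0 m) y (u0 m') y' ?_ hinvm.1 ?_ ?_
                (hlmm ▸ hinvm'.1) ?_ (ed y y' hy hy')
              · rcases hy with rfl | rfl
                · exact hinvm.2.1.symm
                · exact hinvm.2.2.1.symm
              · rcases hy with rfl | rfl
                · exact hz1Zs m.length (by omega)
                · exact hz2Zs m.length (by omega)
              · rcases hy' with rfl | rfl
                · exact hinvm'.2.1.symm
                · exact hinvm'.2.2.1.symm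
              · rcases hy' with rfl | rfl
                · exact hz1Zs m.length (by omega)
                · exact hz2Zs m.length (by omega)
            have hx'mem := hx'.1
            rw [← heq, ← hlmm] at hx'mem
            rcases hx.1 with hA | hB <;> rcases hx'mem with hA' | hB'
            · have := hdis z1 z1 (Or.inl rfl) (Or.inl rfl)
              exact absurd (this ▸ Set.mem_inter hA hA') (Set.notMem_empty _)
            · have := hdis z1 z2 (Or.inl rfl) (Or.inr rfl)
              exact absurd (this ▸ Set.mem_inter hA hB') (Set.notMem_empty _)
            · have := hdis z2 z1 (Or.inr rfl) (Or.inl rfl)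
              exact absurd (this ▸ Set.mem_inter hB hA') (Set.notMem_empty _)
            · have := hdis z2 z2 (Or.inr rfl) (Or.inr rfl)
              exact absurd (this ▸ Set.mem_inter hB hB') (Set.notMem_empty _)
    -- assemble the tree branch
    refine Or.inr ⟨⟨fun ℓ => u0 ℓ.1, ?_⟩, ?_, ?_, ?_, ?_, ?_⟩
    · -- homomorphism
      intro ℓ ℓ' hadj
      rw [Tdr, SimpleGraph.fromRel_adj] at hadj
      rcases hadj.2 with ⟨a, ha⟩ | ⟨a, ha⟩
      · have hlen : ℓ.1.length + 1 ≤ r := by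
          have := ℓ'.2; rw [ha] at this; simpa using this
        have hadjw := (hchild ℓ.1.length (by omega) (u0 ℓ.1)
          (hInvAll ℓ.1 (by omega)) _ (hmemG a ℓ.1 hlen)).2.2.1
        show G.Adj (u0 ℓ.1) (u0 ℓ'.1)
        rw [ha]
        exact hadjw
      · have hlen : ℓ'.1.length + 1 ≤ r := by
          have := ℓ.2; rw [ha] at this; simpa using this
        have hadjw := (hchild ℓ'.1.length (by omega) (u0 ℓ'.1)
          (hInvAll ℓ'.1 (by omega)) _ (hmemG a ℓ'.1 hlen)).2.2.1
        show G.Adj (u0 ℓ.1) (u0 ℓ'.1)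
        rw [ha]
        exact hadjw.symm
    · -- injectivity
      intro ℓ ℓ' hh
      exact Subtype.ext (hinj ℓ.1 ℓ'.1 ℓ.2 ℓ'.2 hh)
    · -- root
      show u0 [] = z
      rw [hu0def]
      exact build_nil d stp z
    · -- adjacency to z1, z2
      intro ℓ
      have hinv := hInvAll ℓ.1 ℓ.2
      exact ⟨hinv.2.1.ne', hinv.2.2.1.ne', hinv.2.1, hinv.2.2.1⟩
    · -- parent condition
      intro ℓ ℓp a hcons
      have hlen : ℓp.1.length + 1 ≤ r := by
        have := ℓ.2; rw [hcons] at this; simpa using this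
      have hmem := hmemG a ℓp.1 hlen
      constructor
      · show u0 ℓ.1 ∈ _
        rw [hcons]
        exact hmem.1
      · intro x hx
        rcases hx with hA | hB
        · exact (hAfacts ℓp.1.length (by omega) _ (hInvAll ℓp.1 (by omega))).2.2.1 hA
        · exact (hBfacts ℓp.1.length (by omega) _ (hInvAll ℓp.1 (by omega))).2.2.1 hB
    · -- range
      ext v
      simp only [Set.mem_inter_iff, Set.mem_range, Set.mem_singleton_iff]
      constructor
      · rintro ⟨⟨ℓ, rfl⟩, hvZ⟩
        exact (hInvAll ℓ.1 ℓ.2).2.2.2.2 hvZ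
      · intro hv
        refine ⟨⟨⟨[], by simp⟩, ?_⟩, hv ▸ hZ0sub (by simp)⟩
        show u0 [] = v
        rw [hv, hu0def]
        exact build_nil d stp z
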